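/- If μ is a probability measure on J_β satisfying μ = p·μ∘T_β^{-1} + (1-p)·μ∘L_β^{-1} and μ is absolutely continuous with respect to Lebesgue measure with a density f that is bounded below by a positive constant c on some nonempty open interval (a,b), then for each n ≥ 1 the density is bounded below by p^n c/β^n Lebesgue-a.e. on T_β^n((a,b)). -/

import Mathlib

open MeasureTheory Set
open scoped Classical

/-- The interval `J_β = [0, ⌊β⌋/(β-1)]`. -/
noncomputable def Jbeta (β : ℝ) : Set ℝ := Set.Icc 0 ((⌊β⌋ : ℝ) / (β - 1))

/-- The greedy digit of `x` in base `β`: equals `j` iff `x ∈ C(j)`, where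
`C(j) = [j/β, (j+1)/β)` for `j < ⌊β⌋` and `C(⌊β⌋) = [⌊β⌋/β, ⌊β⌋/(β-1)]`. -/
noncomputable def gdigit (β x : ℝ) : ℤ := min ⌊β * x⌋ ⌊β⌋

/-- The greedy map `T_β(x) = βx - d` for `x ∈ C(d)`. -/
noncomputable def gmap (β x : ℝ) : ℝ := β * x - gdigit β x

/-- The reflection `ℓ(x) = ⌊β⌋/(β-1) - x`. -/
noncomputable def lref (β x : ℝ) : ℝ := (⌊β⌋ : ℝ) / (β - 1) - x

/-- The lazy digit: the `d` with `x ∈ Δ(d) = ℓ(C(⌊β⌋ - d))`. -/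
noncomputable def ldigit (β x : ℝ) : ℤ := ⌊β⌋ - gdigit β (lref β x)

/-- The lazy map `L_β(x) = βx - d` for `x ∈ Δ(d)`. -/
noncomputable def lmap (β x : ℝ) : ℝ := β * x - ldigit β x

/-- Membership in the union of the switch regions
`S_k = [k/β, ⌊β⌋/(β(β-1)) + (k-1)/β]`, `k = 1, …, ⌊β⌋`. -/
def inSwitch (β x : ℝ) : Prop :=
  ∃ k : ℤ, 1 ≤ k ∧ k ≤ ⌊β⌋ ∧ (k : ℝ) / β ≤ x ∧
    x ≤ (⌊β⌋ : ℝ) / (β * (β - 1)) + ((k : ℝ) - 1) / β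

/-- The digit `d_1(ω,x)` assigned by the random map: the greedy digit, unless `x` is
in a switch region and the first coin is `0` (tails), in which case the lazy digit. -/
noncomputable def rdigit (β : ℝ) (ω : ℕ → Bool) (x : ℝ) : ℤ :=
  if inSwitch β x ∧ ω 0 = false then ldigit β x else gdigit β x

/-- The random β-expansion map `K_β` on `Ω × J_β`, `Ω = {0,1}^ℕ`: the coin sequence is
shifted exactly when `x` lies in a switch region. -/
noncomputable def kmap (β : ℝ) (p : (ℕ → Bool) × ℝ) : (ℕ → Bool) × ℝ :=
  ((if inSwitch β p.2 then (fun n => p.1 (n + 1)) else p.1),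
    β * p.2 - rdigit β p.1 p.2)

/-- The digit `d_{n+1}(ω,x) = d_1(K_β^n(ω,x))` of the random β-expansion. -/
noncomputable def rdig (β : ℝ) (n : ℕ) (ω : ℕ → Bool) (x : ℝ) : ℤ :=
  rdigit β ((kmap β)^[n] (ω, x)).1 ((kmap β)^[n] (ω, x)).2

noncomputable def accD (β : ℝ) : ℕ → ℝ → ℝ
  | 0, _ => 0
  | n+1, x => β * accD β n x + (gdigit β ((gmap β)^[n] x) : ℝ)

lemma measurable_gdigit (β : ℝ) : Measurable (gdigit β) :=
  (measurable_of_countable (fun q : ℤ => min q ⌊β⌋)).comp (measurable_const_mul β).floor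

lemma measurable_gmap (β : ℝ) : Measurable (gmap β) :=
  (measurable_const_mul β).sub
    ((measurable_of_countable _).comp (measurable_gdigit β))

lemma gmap_iterate_eq (β : ℝ) : ∀ (n : ℕ) (x : ℝ),
    (gmap β)^[n] x = β ^ n * x - accD β n x := by
  intro n
  induction n with
  | zero => intro x; simp [accD]
  | succ n ih =>
    intro x
    rw [Function.iterate_succ_apply']
    show β * ((gmap β)^[n] x) - gdigit β ((gmap β)^[n] x) = β ^ (n+1) * x - accD β (n+1) x
    simp only [accD]
    rw [ih x]
    ring

lemma accD_eq_of_digits_eq (β : ℝ) : ∀ (n : ℕ) (x y : ℝ),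
    (∀ i < n, gdigit β ((gmap β)^[i] x) = gdigit β ((gmap β)^[i] y)) →
    accD β n x = accD β n y := by
  intro n
  induction n with
  | zero => intro x y _; simp [accD]
  | succ n ih =>
    intro x y h
    simp only [accD]
    rw [ih x y (fun i hi => h i (Nat.lt_succ_of_lt hi)), h n (Nat.lt_succ_self n)]


theorem density_spreads (β : ℝ) (hβ : 1 < β) (hni : ¬ ∃ m : ℤ, β = (m : ℝ))
    (p : ℝ) (hp0 : 0 < p) (hp1 : p < 1)
    (μ : Measure ℝ) [IsProbabilityMeasure μ]
    (hinv : μ = ENNReal.ofReal p • μ.map (gmap β) +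
      ENNReal.ofReal (1 - p) • μ.map (lmap β))
    (f : ℝ → ℝ) (hfm : Measurable f)
    (hdens : μ = volume.withDensity (fun x => ENNReal.ofReal (f x)))
    (a b c : ℝ) (hab : a < b) (hsub : Set.Ioo a b ⊆ Jbeta β) (hc : 0 < c)
    (hlow : ∀ x ∈ Set.Ioo a b, c ≤ f x) :
    ∀ n : ℕ, 1 ≤ n →
      ∀ᵐ x ∂(volume.restrict ((gmap β)^[n] '' Set.Ioo a b)),
        p ^ n * c / β ^ n ≤ f x := by
  intro n hn
  have hβ0 : (0:ℝ) < β := lt_trans one_pos hβ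
  have hbn : (0:ℝ) < β ^ n := pow_pos hβ0 n
  have hTm : Measurable (gmap β) := measurable_gmap β
  have hTnm : Measurable ((gmap β)^[n]) := hTm.iterate n
  -- Step 1: one-step measure inequality
  have key1 : ∀ A : Set ℝ, MeasurableSet A →
      ENNReal.ofReal p * μ (gmap β ⁻¹' A) ≤ μ A := by
    intro A hA
    calc ENNReal.ofReal p * μ (gmap β ⁻¹' A)
        = ENNReal.ofReal p * (μ.map (gmap β)) A := by
          rw [Measure.map_apply hTm hA]
      _ ≤ ENNReal.ofReal p * (μ.map (gmap β)) A
          + ENNReal.ofReal (1 - p) * (μ.map (lmap β)) A := le_self_add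
      _ = μ A := by
          conv_rhs => rw [hinv]
          simp [Measure.add_apply, Measure.smul_apply, smul_eq_mul]
  -- Step 2: n-step measure inequality
  have keyn : ∀ m : ℕ, ∀ A : Set ℝ, MeasurableSet A →
      ENNReal.ofReal (p ^ m) * μ ((gmap β)^[m] ⁻¹' A) ≤ μ A := by
    intro m
    induction m with
    | zero => intro A hA; simp
    | succ m ih =>
      intro A hA
      have hA' : MeasurableSet ((gmap β)^[m] ⁻¹' A) := (hTm.iterate m) hA
      have hpre : (gmap β)^[m+1] ⁻¹' A = gmap β ⁻¹' ((gmap β)^[m] ⁻¹' A) := by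
        rw [Function.iterate_succ]
        rfl
      calc ENNReal.ofReal (p ^ (m+1)) * μ ((gmap β)^[m+1] ⁻¹' A)
          = ENNReal.ofReal (p ^ m) *
              (ENNReal.ofReal p * μ (gmap β ⁻¹' ((gmap β)^[m] ⁻¹' A))) := by
            rw [hpre, pow_succ, ENNReal.ofReal_mul (pow_nonneg hp0.le m), mul_assoc]
        _ ≤ ENNReal.ofReal (p ^ m) * μ ((gmap β)^[m] ⁻¹' A) :=
            mul_le_mul_right (key1 _ hA') _
        _ ≤ μ A := ih A hA
  -- Partition of (a,b) by itineraries
  set Ψ : ℝ → (Fin n → ℤ) := fun x i => gdigit β ((gmap β)^[i.1] x) with hΨdef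
  have hΨ : Measurable Ψ :=
    measurable_pi_lambda _ fun i => (measurable_gdigit β).comp (hTm.iterate i.1)
  set S : (Fin n → ℤ) → Set ℝ := fun σ => Ψ ⁻¹' {σ} ∩ Ioo a b with hSdef
  have hSm : ∀ σ, MeasurableSet (S σ) := fun σ =>
    (hΨ (measurableSet_singleton σ)).inter measurableSet_Ioo
  have hSdisj : Pairwise (Function.onFun Disjoint S) := by
    intro σ τ hst
    exact ((pairwise_disjoint_fiber Ψ) hst).mono inter_subset_left inter_subset_left
  have hScover : Ioo a b = ⋃ σ, S σ := by
    ext x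
    simp only [mem_iUnion, hSdef, mem_inter_iff, mem_preimage, mem_singleton_iff]
    constructor
    · intro hx; exact ⟨Ψ x, rfl, hx⟩
    · rintro ⟨σ, _, hx⟩; exact hx
  -- the constant value of accD on each fiber
  set w : (Fin n → ℤ) → ℝ :=
    fun σ => if h : (S σ).Nonempty then accD β n h.choose else 0 with hwdef
  have hw : ∀ σ, ∀ x ∈ S σ, accD β n x = w σ := by
    intro σ x hx
    have hne : (S σ).Nonempty := ⟨x, hx⟩
    rw [hwdef]
    simp only [dif_pos hne]
    apply accD_eq_of_digits_eq
    intro i hi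
    have h1 : Ψ x = σ := hx.1
    have h2 : Ψ hne.choose = σ := hne.choose_spec.1
    have e1 := congrFun h1 ⟨i, hi⟩
    have e2 := congrFun h2 ⟨i, hi⟩
    simp only [hΨdef] at e1 e2
    rw [e1, e2]
  have hTn : ∀ σ, ∀ x ∈ S σ, (gmap β)^[n] x = β ^ n * x - w σ := by
    intro σ x hx
    rw [gmap_iterate_eq β n x, hw σ x hx]
  -- inverse affine maps
  set g : (Fin n → ℤ) → ℝ → ℝ := fun σ y => (y + w σ) * (β ^ n)⁻¹ with hgdef
  have hgm : ∀ σ, Measurable (g σ) := fun σ =>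
    (measurable_id.add_const _).mul_const _
  have fact1 : ∀ σ, ∀ x ∈ S σ, g σ ((gmap β)^[n] x) = x := by
    intro σ x hx
    rw [hTn σ x hx, hgdef]
    field_simp
    ring
  have fact2 : ∀ σ, ∀ y : ℝ, g σ y ∈ S σ → (gmap β)^[n] (g σ y) = y := by
    intro σ y hy
    rw [hTn σ _ hy, hgdef]
    field_simp
    ring
  -- volume scaling under g σ
  have hvol : ∀ σ (W : Set ℝ),
      volume (g σ ⁻¹' W) = ENNReal.ofReal (β ^ n) * volume W := by
    intro σ W
    have hcomp : g σ ⁻¹' W =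
        (fun y => y + w σ) ⁻¹' ((fun z => z * (β ^ n)⁻¹) ⁻¹' W) := rfl
    rw [hcomp, measure_preimage_add_right,
      Real.volume_preimage_mul_right (inv_ne_zero hbn.ne'), inv_inv,
      abs_of_pos hbn]
  -- image description
  set E : Set ℝ := (gmap β)^[n] '' Ioo a b with hEdef
  have hEim : ∀ σ, (gmap β)^[n] '' S σ = g σ ⁻¹' (S σ) := by
    intro σ
    ext y
    constructor
    · rintro ⟨x, hx, rfl⟩
      show g σ ((gmap β)^[n] x) ∈ S σ
      rw [fact1 σ x hx]; exact hx
    · intro hy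
      exact ⟨g σ y, hy, fact2 σ y hy⟩
  have hE : E = ⋃ σ, g σ ⁻¹' (S σ) := by
    rw [hEdef, hScover, image_iUnion]
    exact iUnion_congr hEim
  have hEmeas : MeasurableSet E := by
    rw [hE]
    exact MeasurableSet.iUnion fun σ => (hgm σ) (hSm σ)
  -- geometric estimate
  have geo : ∀ A : Set ℝ, MeasurableSet A → A ⊆ E →
      volume A ≤ ENNReal.ofReal (β ^ n) *
        volume (Ioo a b ∩ (gmap β)^[n] ⁻¹' A) := by
    intro A hA hAE
    set W : (Fin n → ℤ) → Set ℝ := fun σ => S σ ∩ (gmap β)^[n] ⁻¹' A with hWdef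
    have hWm : ∀ σ, MeasurableSet (W σ) := fun σ => (hSm σ).inter (hTnm hA)
    have hWdisj : Pairwise (Function.onFun Disjoint W) := fun σ τ hst =>
      (hSdisj hst).mono inter_subset_left inter_subset_left
    have step1 : A ⊆ ⋃ σ, g σ ⁻¹' (W σ) := by
      intro y hy
      obtain ⟨x, hx, rfl⟩ := hAE hy
      have hxS : x ∈ S (Ψ x) := ⟨rfl, hx⟩
      refine mem_iUnion.2 ⟨Ψ x, ?_⟩
      show g (Ψ x) ((gmap β)^[n] x) ∈ W (Ψ x)
      rw [fact1 _ x hxS]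
      exact ⟨hxS, hy⟩
    have hWun : ⋃ σ, W σ = Ioo a b ∩ (gmap β)^[n] ⁻¹' A := by
      rw [hWdef, ← iUnion_inter, ← hScover]
    calc volume A ≤ volume (⋃ σ, g σ ⁻¹' (W σ)) := measure_mono step1
      _ ≤ ∑' σ, volume (g σ ⁻¹' (W σ)) := measure_iUnion_le _
      _ = ∑' σ, ENNReal.ofReal (β ^ n) * volume (W σ) := by
          simp only [hvol]
      _ = ENNReal.ofReal (β ^ n) * ∑' σ, volume (W σ) := ENNReal.tsum_mul_left
      _ = ENNReal.ofReal (β ^ n) * volume (⋃ σ, W σ) := by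
          rw [measure_iUnion hWdisj hWm]
      _ = ENNReal.ofReal (β ^ n) * volume (Ioo a b ∩ (gmap β)^[n] ⁻¹' A) := by
          rw [hWun]
  -- density lower bound on measurable sets
  have dens : ∀ B : Set ℝ, MeasurableSet B →
      ENNReal.ofReal c * volume (Ioo a b ∩ B) ≤ μ B := by
    intro B hB
    rw [hdens, withDensity_apply _ hB]
    calc ENNReal.ofReal c * volume (Ioo a b ∩ B)
        = ∫⁻ _ in Ioo a b ∩ B, ENNReal.ofReal c := by
          rw [setLIntegral_const, mul_comm]
      _ ≤ ∫⁻ x in Ioo a b ∩ B, ENNReal.ofReal (f x) := by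
          refine setLIntegral_mono (hfm.ennreal_ofReal) fun x hx => ?_
          exact ENNReal.ofReal_le_ofReal (hlow x hx.1)
      _ ≤ ∫⁻ x in B, ENNReal.ofReal (f x) :=
          lintegral_mono_set inter_subset_right
  -- main a.e. argument
  have main : ∀ s : Set ℝ, MeasurableSet s → (volume.restrict E) s < ⊤ →
      (∫⁻ _ in s, ENNReal.ofReal (p ^ n * c / β ^ n) ∂(volume.restrict E)) ≤
      ∫⁻ x in s, ENNReal.ofReal (f x) ∂(volume.restrict E) := by
    intro s hs _
    have hsE : MeasurableSet (s ∩ E) := hs.inter hEmeas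
    have hpre : MeasurableSet ((gmap β)^[n] ⁻¹' (s ∩ E)) := hTnm hsE
    have h1 : (∫⁻ _ in s, ENNReal.ofReal (p ^ n * c / β ^ n) ∂(volume.restrict E))
        = ENNReal.ofReal (p ^ n * c / β ^ n) * volume (s ∩ E) := by
      rw [setLIntegral_const, Measure.restrict_apply hs]
    have h2 : (∫⁻ x in s, ENNReal.ofReal (f x) ∂(volume.restrict E))
        = μ (s ∩ E) := by
      rw [Measure.restrict_restrict hs, hdens, withDensity_apply _ hsE]
    rw [h1, h2]
    calc ENNReal.ofReal (p ^ n * c / β ^ n) * volume (s ∩ E)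
        ≤ ENNReal.ofReal (p ^ n * c / β ^ n) * (ENNReal.ofReal (β ^ n) *
            volume (Ioo a b ∩ (gmap β)^[n] ⁻¹' (s ∩ E))) :=
          mul_le_mul_right (geo (s ∩ E) hsE inter_subset_right) _
      _ = ENNReal.ofReal (p ^ n) * (ENNReal.ofReal c *
            volume (Ioo a b ∩ (gmap β)^[n] ⁻¹' (s ∩ E))) := by
          rw [← mul_assoc, ← ENNReal.ofReal_mul
            (by positivity : (0:ℝ) ≤ p ^ n * c / β ^ n),
            div_mul_cancel₀ _ hbn.ne', ENNReal.ofReal_mul (pow_nonneg hp0.le n),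
            mul_assoc]
      _ ≤ ENNReal.ofReal (p ^ n) * μ ((gmap β)^[n] ⁻¹' (s ∩ E)) :=
          mul_le_mul_right (dens _ hpre) _
      _ ≤ μ (s ∩ E) := keyn n _ hsE
  have hae := ae_le_of_forall_setLIntegral_le_of_sigmaFinite
    (μ := volume.restrict E) measurable_const main

  filter_upwards [hae] with x hx
  have hκ : (0:ℝ) < p ^ n * c / β ^ n := by positivity
  by_contra h
  push_neg at h
  exact absurd hx (not_le.mpr ((ENNReal.ofReal_lt_ofReal_iff hκ).mpr h))
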